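/- Let 0 < β < 1. There exists a constant c = c(β) ≥ 1 such that for every x ≥ 2 and every t > x, c⁻¹ · t^{β − 1} ≤ ∫_1^∞ (v(v + x))^{β} / (v · (v(v + x) + t)) dv ≤ c · t^{β − 1}. -/

import Mathlib

open MeasureTheory Real

set_option maxHeartbeats 1600000 in
theorem stmt_17 (β : ℝ) (hβ0 : 0 < β) (hβ1 : β < 1) :
    ∃ c : ℝ, 1 ≤ c ∧ ∀ x t : ℝ, 2 ≤ x → x < t →
      c⁻¹ * t ^ (β - 1)
        ≤ (∫ v in Set.Ici (1:ℝ), (v * (v + x)) ^ β / (v * (v * (v + x) + t))) ∧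
      (∫ v in Set.Ici (1:ℝ), (v * (v + x)) ^ β / (v * (v * (v + x) + t)))
        ≤ c * t ^ (β - 1) := by
  have hβ1' : 0 < 1 - β := by linarith
  have hβinv : 0 < 2 / β := by positivity
  have hβinv' : 0 < 1 / (1 - β) := by positivity
  set c : ℝ := 14 + 2 / β + 1 / (1 - β) with hc_def
  have hc14 : 14 ≤ c := by rw [hc_def]; linarith
  have hc0 : 0 < c := by linarith
  refine ⟨c, by linarith, ?_⟩
  intro x t hx hxt
  have hx0 : (0:ℝ) < x := by linarith
  have ht0 : (0:ℝ) < t := by linarith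
  have ht2 : (2:ℝ) < t := by linarith
  set f : ℝ → ℝ := fun v => (v * (v + x)) ^ β / (v * (v * (v + x) + t)) with hf_def
  set a : ℝ := min (Real.sqrt t) (t / x) with ha_def
  have hsq : Real.sqrt t * Real.sqrt t = t := Real.mul_self_sqrt ht0.le
  have ha1 : 1 ≤ a := by
    apply le_min
    · rw [show (1:ℝ) = Real.sqrt 1 by simp]
      exact Real.sqrt_le_sqrt (by linarith)
    · rw [le_div_iff₀ hx0]; linarith
  have ha0 : 0 < a := by linarith
  have haa : a * a ≤ t := by
    calc a * a ≤ Real.sqrt t * Real.sqrt t :=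
          mul_le_mul (min_le_left _ _) (min_le_left _ _) ha0.le (Real.sqrt_nonneg t)
      _ = t := hsq
  have hax : a * x ≤ t := by
    have h := min_le_right (Real.sqrt t) (t / x)
    calc a * x ≤ (t / x) * x := by
          apply mul_le_mul_of_nonneg_right _ hx0.le
          exact h
      _ = t := div_mul_cancel₀ t hx0.ne'
  have hta : t ≤ a * (a + x) := by
    rcases le_total (Real.sqrt t) (t / x) with h | h
    · have he : a = Real.sqrt t := min_eq_left h
      nlinarith [Real.sqrt_nonneg t]
    · have he : a = t / x := min_eq_right h
      have : a * x = t := by rw [he]; exact div_mul_cancel₀ t hx0.ne'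
      nlinarith
  clear_value a
  clear_value c
  -- basic pointwise facts
  have hden : ∀ v : ℝ, 0 < v → 0 < v * (v * (v + x) + t) := by
    intro v hv; have : 0 < v * (v + x) := by positivity
    positivity
  have hf_nonneg : ∀ v : ℝ, 0 < v → 0 ≤ f v := by
    intro v hv
    apply div_nonneg (Real.rpow_nonneg (by positivity) β) (hden v hv).le
  -- measurability
  have hmeas : Measurable f := by fun_prop
  -- key pointwise bound on [1, a]
  have key1 : ∀ v ∈ Set.Icc 1 a, f v ≤ (a + x) ^ β / t * v ^ (β - 1) := by
    intro v hv
    obtain ⟨hv1, hva⟩ := hv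
    have hv0 : (0:ℝ) < v := by linarith
    have hw0 : (0:ℝ) < v * (v + x) := by positivity
    have step1 : f v ≤ (v * (v + x)) ^ β / (v * t) := by
      apply div_le_div_of_nonneg_left (Real.rpow_nonneg hw0.le β) (by positivity)
      nlinarith
    have step2 : (v * (v + x)) ^ β ≤ v ^ β * (a + x) ^ β := by
      rw [← Real.mul_rpow hv0.le (by linarith : (0:ℝ) ≤ a + x)]
      exact Real.rpow_le_rpow hw0.le (by nlinarith) hβ0.le
    have hvb : v ^ (β - 1) = v ^ β / v := by
      rw [Real.rpow_sub hv0, Real.rpow_one]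
    calc f v ≤ (v * (v + x)) ^ β / (v * t) := step1
      _ ≤ v ^ β * (a + x) ^ β / (v * t) := by
          exact (div_le_div_iff_of_pos_right (by positivity)).mpr step2
      _ = (a + x) ^ β / t * v ^ (β - 1) := by
          rw [hvb]; field_simp
  -- key pointwise bound on (a, ∞)
  have key2 : ∀ v : ℝ, a ≤ v → f v ≤ (a + x) ^ (β - 1) * v ^ (β - 2) := by
    intro v hva
    have hv0 : (0:ℝ) < v := by linarith
    have hw0 : (0:ℝ) < v * (v + x) := by positivity
    have hwβ : (0:ℝ) ≤ (v * (v + x)) ^ β := Real.rpow_nonneg hw0.le β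
    have step1 : f v ≤ (v * (v + x)) ^ β / (v * (v * (v + x))) := by
      apply div_le_div_of_nonneg_left hwβ (by positivity)
      nlinarith
    have hwb : (v * (v + x)) ^ (β - 1) = (v * (v + x)) ^ β / (v * (v + x)) := by
      rw [Real.rpow_sub hw0, Real.rpow_one]
    have step2 : (v * (v + x)) ^ β / (v * (v * (v + x))) = (v * (v + x)) ^ (β - 1) / v := by
      rw [hwb, div_div]; ring_nf
    have step3 : (v * (v + x)) ^ (β - 1) ≤ ((a + x) * v) ^ (β - 1) := by
      apply Real.rpow_le_rpow_of_nonpos (mul_pos (by linarith) hv0)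
        (by nlinarith [mul_nonneg (sub_nonneg.mpr hva) hv0.le]) (by linarith)
    have step4 : ((a + x) * v) ^ (β - 1) = (a + x) ^ (β - 1) * v ^ (β - 1) :=
      Real.mul_rpow (by linarith) hv0.le
    have hvb2 : v ^ (β - 2) = v ^ (β - 1) / v := by
      rw [show β - 2 = β - 1 - 1 by ring, Real.rpow_sub hv0, Real.rpow_one]
    calc f v ≤ (v * (v + x)) ^ β / (v * (v * (v + x))) := step1
      _ = (v * (v + x)) ^ (β - 1) / v := step2
      _ ≤ ((a + x) * v) ^ (β - 1) / v := (div_le_div_iff_of_pos_right hv0).mpr step3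
      _ = (a + x) ^ (β - 1) * v ^ (β - 2) := by rw [step4, hvb2]; ring
  -- key pointwise lower bound on [a, 2a]
  have key3 : ∀ v ∈ Set.Icc a (2 * a), t ^ (β - 1) / (14 * a) ≤ f v := by
    intro v hv
    obtain ⟨hva, hv2a⟩ := hv
    have hv0 : (0:ℝ) < v := by linarith
    have hw0 : (0:ℝ) < v * (v + x) := by positivity
    have hwt : t ≤ v * (v + x) := by
      have := mul_le_mul hva (show a + x ≤ v + x by linarith) (by linarith) hv0.le
      linarith
    have hnum : t ^ β ≤ (v * (v + x)) ^ β := Real.rpow_le_rpow ht0.le hwt hβ0.le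
    have h6t : v * (v + x) ≤ 6 * t := by
      have := mul_le_mul hv2a (show v + x ≤ 2 * a + x by linarith) (by linarith) (by linarith : (0:ℝ) ≤ 2 * a)
      nlinarith
    have hdenb : v * (v * (v + x) + t) ≤ 14 * a * t := by
      have h2 : v * (v * (v + x) + t) ≤ (2 * a) * (7 * t) :=
        mul_le_mul hv2a (by linarith) (by linarith) (by linarith)
      linarith [h2]
      
    have htb : t ^ (β - 1) / (14 * a) = t ^ β / (14 * a * t) := by
      rw [Real.rpow_sub ht0, Real.rpow_one, div_div]
      ring_nf
    rw [htb]
    exact div_le_div₀ (Real.rpow_nonneg hw0.le β) hnum (hden v hv0) hdenb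
  -- integrability
  have hint_Icc : IntegrableOn f (Set.Icc 1 a) := by
    apply ContinuousOn.integrableOn_Icc
    apply ContinuousOn.div
    · apply Continuous.continuousOn
      apply Continuous.rpow_const (by continuity)
      intro v; exact Or.inr hβ0.le
    · exact Continuous.continuousOn (by continuity)
    · intro v hv; exact (hden v (by linarith [hv.1])).ne'
  have hint_g2 : IntegrableOn (fun v : ℝ => (a + x) ^ (β - 1) * v ^ (β - 2)) (Set.Ioi a) :=
    (integrableOn_Ioi_rpow_of_lt (by linarith) ha0).const_mul _
  have hint_Ioi : IntegrableOn f (Set.Ioi a) := by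
    apply hint_g2.mono' (hmeas.aestronglyMeasurable.restrict)
    filter_upwards [ae_restrict_mem measurableSet_Ioi] with v hv
    have hv0 : (0:ℝ) < v := by have := Set.mem_Ioi.mp hv; linarith
    rw [Real.norm_eq_abs, abs_of_nonneg (hf_nonneg v hv0)]
    exact key2 v (le_of_lt (Set.mem_Ioi.mp hv))
  have hint : IntegrableOn f (Set.Ici 1) := by
    rw [← Set.Icc_union_Ioi_eq_Ici ha1]
    exact hint_Icc.union hint_Ioi
  have hdisj : Disjoint (Set.Icc (1:ℝ) a) (Set.Ioi a) :=
    (Set.Iic_disjoint_Ioi le_rfl).mono_left Set.Icc_subset_Iic_self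
  have hsplit : (∫ v in Set.Ici (1:ℝ), f v) = (∫ v in Set.Icc (1:ℝ) a, f v) + ∫ v in Set.Ioi a, f v := by
    rw [← Set.Icc_union_Ioi_eq_Ici ha1]
    exact setIntegral_union hdisj measurableSet_Ioi hint_Icc hint_Ioi
  have htb1 : (0:ℝ) < t ^ (β - 1) := Real.rpow_pos_of_pos ht0 _
  -- upper bound, piece 1
  have hint_g1 : IntegrableOn (fun v : ℝ => (a + x) ^ β / t * v ^ (β - 1)) (Set.Icc 1 a) := by
    apply Integrable.const_mul
    apply ContinuousOn.integrableOn_Icc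
    apply ContinuousOn.rpow_const (continuous_id.continuousOn)
    intro v hv; exact Or.inl (by intro h; simp at h; linarith [hv.1])
  have hI1 : (∫ v in Set.Icc (1:ℝ) a, v ^ (β - 1)) ≤ a ^ β / β := by
    rw [MeasureTheory.integral_Icc_eq_integral_Ioc, ← intervalIntegral.integral_of_le ha1,
      integral_rpow (Or.inl (by linarith))]
    have h1 : β - 1 + 1 = β := by ring
    rw [h1, Real.one_rpow]
    have : (0:ℝ) < a ^ β := Real.rpow_pos_of_pos ha0 β
    exact (div_le_div_iff_of_pos_right hβ0).mpr (by linarith)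
  have hI2 : (∫ v in Set.Ioi a, (v:ℝ) ^ (β - 2)) = a ^ (β - 1) / (1 - β) := by
    rw [integral_Ioi_rpow_of_lt (by linarith) ha0, show β - 2 + 1 = β - 1 by ring,
      div_eq_div_iff (by linarith) (by linarith : (1:ℝ) - β ≠ 0)]
    ring
  have hUp1 : (∫ v in Set.Icc (1:ℝ) a, f v) ≤ 2 / β * t ^ (β - 1) := by
    have h1 : (∫ v in Set.Icc (1:ℝ) a, f v)
        ≤ ∫ v in Set.Icc (1:ℝ) a, (a + x) ^ β / t * v ^ (β - 1) :=
      setIntegral_mono_on hint_Icc hint_g1 measurableSet_Icc key1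
    rw [integral_const_mul] at h1
    have hx1 : (0:ℝ) ≤ (a + x) ^ β / t := by positivity
    have h3 : (a + x) ^ β / t * (∫ v in Set.Icc (1:ℝ) a, v ^ (β - 1))
        ≤ (a + x) ^ β / t * (a ^ β / β) := mul_le_mul_of_nonneg_left hI1 hx1
    have htβ : (0:ℝ) ≤ t ^ β := Real.rpow_nonneg ht0.le β
    have hkey : (a + x) ^ β * a ^ β ≤ 2 * (t ^ (β - 1) * t) := by
      calc (a + x) ^ β * a ^ β = (a * (a + x)) ^ β := by
            rw [Real.mul_rpow ha0.le (by linarith : (0:ℝ) ≤ a + x)]; ring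
        _ ≤ (2 * t) ^ β := Real.rpow_le_rpow (by positivity) (by nlinarith) hβ0.le
        _ = 2 ^ β * t ^ β := Real.mul_rpow (by norm_num) ht0.le
        _ ≤ 2 * t ^ β := by
            have h7 : (2:ℝ) ^ β ≤ 2 := by
              calc (2:ℝ) ^ β ≤ 2 ^ (1:ℝ) := Real.rpow_le_rpow_of_exponent_le one_le_two hβ1.le
                _ = 2 := Real.rpow_one 2
            exact mul_le_mul_of_nonneg_right h7 htβ
        _ = 2 * (t ^ (β - 1) * t) := by rw [← Real.rpow_add_one ht0.ne' (β - 1)]; norm_num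
    have h9 : (a + x) ^ β / t * (a ^ β / β) ≤ 2 / β * t ^ (β - 1) := by
      rw [div_mul_div_comm, div_le_iff₀ (by positivity : (0:ℝ) < t * β)]
      have heq : 2 / β * t ^ (β - 1) * (t * β) = 2 * (t ^ (β - 1) * t) := by
        field_simp
      rw [heq]; exact hkey
    linarith
  have hUp2 : (∫ v in Set.Ioi a, f v) ≤ 1 / (1 - β) * t ^ (β - 1) := by
    have h1 : (∫ v in Set.Ioi a, f v)
        ≤ ∫ v in Set.Ioi a, (a + x) ^ (β - 1) * v ^ (β - 2) :=
      setIntegral_mono_on hint_Ioi hint_g2 measurableSet_Ioi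
        (fun v hv => key2 v (le_of_lt hv))
    rw [integral_const_mul, hI2] at h1
    have h5 : (a * (a + x)) ^ (β - 1) ≤ t ^ (β - 1) :=
      Real.rpow_le_rpow_of_nonpos ht0 hta (by linarith)
    have h6 : (a + x) ^ (β - 1) * (a ^ (β - 1) / (1 - β)) ≤ 1 / (1 - β) * t ^ (β - 1) := by
      calc (a + x) ^ (β - 1) * (a ^ (β - 1) / (1 - β))
          = (a * (a + x)) ^ (β - 1) / (1 - β) := by
            rw [Real.mul_rpow ha0.le (by linarith : (0:ℝ) ≤ a + x)]; ring
        _ ≤ t ^ (β - 1) / (1 - β) := (div_le_div_iff_of_pos_right hβ1').mpr h5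
        _ = 1 / (1 - β) * t ^ (β - 1) := by ring
    linarith
  have hUpper : (∫ v in Set.Ici (1:ℝ), f v) ≤ c * t ^ (β - 1) := by
    rw [hsplit]
    have h14 : (0:ℝ) ≤ 14 * t ^ (β - 1) := by positivity
    have hcc : c * t ^ (β - 1) = 14 * t ^ (β - 1) + 2 / β * t ^ (β - 1) + 1 / (1 - β) * t ^ (β - 1) := by
      rw [hc_def]; ring
    linarith
  -- lower bound
  have hfi_sub : IntegrableOn f (Set.Icc a (2 * a)) :=
    hint.mono_set (fun v hv => le_trans ha1 hv.1)
  have hconst_int : IntegrableOn (fun _ : ℝ => t ^ (β - 1) / (14 * a)) (Set.Icc a (2 * a)) := by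
    apply (integrableOn_const_iff enorm_ne_top).mpr
    right
    rw [Real.volume_Icc]
    exact ENNReal.ofReal_lt_top
  have hLow1 : t ^ (β - 1) / 14 ≤ ∫ v in Set.Icc a (2 * a), f v := by
    have h1 : (∫ _v in Set.Icc a (2 * a), t ^ (β - 1) / (14 * a))
        ≤ ∫ v in Set.Icc a (2 * a), f v :=
      setIntegral_mono_on hconst_int hfi_sub measurableSet_Icc key3
    rw [setIntegral_const, Real.volume_real_Icc_of_le (by linarith : a ≤ 2 * a), smul_eq_mul] at h1
    have heq : (2 * a - a) * (t ^ (β - 1) / (14 * a)) = t ^ (β - 1) / 14 := by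
      field_simp; ring
    linarith [h1, heq.symm.le, heq.le]
  have hLow2 : (∫ v in Set.Icc a (2 * a), f v) ≤ ∫ v in Set.Ici (1:ℝ), f v := by
    apply setIntegral_mono_set hint
    · filter_upwards [ae_restrict_mem measurableSet_Ici] with v hv
      exact hf_nonneg v (by linarith [Set.mem_Ici.mp hv])
    · exact HasSubset.Subset.eventuallyLE (fun v hv => le_trans ha1 hv.1)
  constructor
  · have hinv : c⁻¹ ≤ (14:ℝ)⁻¹ := inv_anti₀ (by norm_num) hc14
    have : c⁻¹ * t ^ (β - 1) ≤ 14⁻¹ * t ^ (β - 1) :=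
      mul_le_mul_of_nonneg_right hinv htb1.le
    have h14 : (14:ℝ)⁻¹ * t ^ (β - 1) = t ^ (β - 1) / 14 := by ring
    linarith
  · exact hUpper
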